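/- Dirichlet (Thomson) principle for reversible chains: if Δ is symmetric (Δ^{ij} = Δ^{ji}), then for distinct states a, b, r_{ab} = 1/T_{ab} = min over φ with φ_a = 1, φ_b = 0 of ∑_{ij} φ_i Δ^{ij} φ_j. -/

import Mathlib

/-- Dirichlet (Thomson) principle for reversible chains: if `Δ` is symmetric
then for `a ≠ b` the commuting rate `1 / T a b` is the minimum of the energy
`∑ᵢⱼ φᵢ Δ^{ij} φⱼ` over `φ` with `φ a = 1`, `φ b = 0`. -/
theorem dirichlet_principle_reversible {n : ℕ}
    (P : Matrix (Fin n) (Fin n) ℝ)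
    (hP0 : ∀ i j, 0 ≤ P i j) (hP1 : ∀ i, ∑ j, P i j = 1)
    (herg : ∃ k : ℕ, ∀ i j, 0 < (P ^ k) i j)
    (w : Fin n → ℝ)
    (hw1 : ∑ i, w i = 1) (hwpos : ∀ i, 0 < w i)
    (hwP : ∀ j, ∑ i, w i * P i j = w j)
    (Δ : Matrix (Fin n) (Fin n) ℝ)
    (hΔ : ∀ i j, Δ i j = w i * ((if i = j then (1 : ℝ) else 0) - P i j))
    (hsymm : ∀ i j, Δ i j = Δ j i)
    (M : Fin n → Fin n → ℝ)
    (hMdiag : ∀ b, M b b = 0)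
    (hMstep : ∀ a b, a ≠ b → M a b = 1 + ∑ j, P a j * M j b)
    (T : Fin n → Fin n → ℝ)
    (hT : ∀ a b, T a b = M a b + M b a)
    (a b : Fin n) (hab : a ≠ b) :
    IsLeast
      { v : ℝ | ∃ φ : Fin n → ℝ, φ a = 1 ∧ φ b = 0 ∧
          v = ∑ i, ∑ j, φ i * Δ i j * φ j }
      (1 / T a b) := by
  classical
  set Q : (Fin n → ℝ) → ℝ := fun x => ∑ i, ∑ j, x i * Δ i j * x j with hQ
  set u : Fin n → ℝ := fun i => M i b - M i a with hu
  -- Row sums of Δ vanish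
  have hrow : ∀ i, ∑ j, Δ i j = 0 := by
    intro i
    have h1 : ∑ j, Δ i j = w i * ((∑ j, if i = j then (1:ℝ) else 0) - ∑ j, P i j) := by
      simp only [hΔ, mul_sub, Finset.sum_sub_distrib, Finset.mul_sum]
    rw [h1, hP1]
    simp
  -- Column sums of Δ vanish
  have hcol : ∀ j, ∑ i, Δ i j = 0 := by
    intro j
    have h1 : ∑ i, Δ i j = (∑ i, if i = j then w i else 0) - ∑ i, w i * P i j := by
      simp only [hΔ, mul_sub, Finset.sum_sub_distrib]
      congr 1
      · refine Finset.sum_congr rfl fun i _ => ?_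
        by_cases h : i = j <;> simp [h]
    rw [h1, hwP]
    simp
  -- Quadratic form as sum of squares
  have hA : ∀ x : Fin n → ℝ, ∑ i, ∑ j, w i * P i j * (x i)^2 = ∑ i, w i * (x i)^2 := by
    intro x
    refine Finset.sum_congr rfl fun i _ => ?_
    have h1 : ∑ j, w i * P i j * (x i)^2 = (w i * (x i)^2) * ∑ j, P i j := by
      rw [Finset.mul_sum]
      exact Finset.sum_congr rfl fun j _ => by ring
    rw [h1, hP1 i, mul_one]
  have hB : ∀ x : Fin n → ℝ, ∑ i, ∑ j, w i * P i j * (x j)^2 = ∑ j, w j * (x j)^2 := by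
    intro x
    rw [Finset.sum_comm]
    refine Finset.sum_congr rfl fun j _ => ?_
    have h1 : ∑ i, w i * P i j * (x j)^2 = (∑ i, w i * P i j) * (x j)^2 :=
      (Finset.sum_mul _ _ _).symm
    rw [h1, hwP j]
  have hQ_expand : ∀ x : Fin n → ℝ,
      Q x = ∑ i, w i * (x i)^2 - ∑ i, ∑ j, w i * P i j * (x i * x j) := by
    intro x
    have h1 : ∀ i j, x i * Δ i j * x j =
        (if i = j then w i * (x i * x j) else 0) - w i * P i j * (x i * x j) := by
      intro i j
      rw [hΔ]
      by_cases h : i = j <;> simp [h] <;> ring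
    simp only [hQ, h1, Finset.sum_sub_distrib]
    congr 1
    refine Finset.sum_congr rfl fun i _ => ?_
    rw [Finset.sum_ite_eq Finset.univ i (fun j => w i * (x i * x j))]
    simp [pow_two]
  have key : ∀ x : Fin n → ℝ, Q x = (1/2) * ∑ i, ∑ j, w i * P i j * (x i - x j)^2 := by
    intro x
    have e : ∀ i j, w i * P i j * (x i - x j)^2 =
        w i * P i j * (x i)^2 + w i * P i j * (x j)^2 - 2 * (w i * P i j * (x i * x j)) := by
      intro i j; ring
    have h2 : ∑ i, ∑ j, w i * P i j * (x i - x j)^2 =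
        (∑ i, ∑ j, w i * P i j * (x i)^2) + (∑ i, ∑ j, w i * P i j * (x j)^2)
          - 2 * ∑ i, ∑ j, w i * P i j * (x i * x j) := by
      simp only [e, Finset.sum_sub_distrib, Finset.sum_add_distrib, Finset.mul_sum]
    rw [h2, hA x, hB x, hQ_expand x]
    ring
  have hQpos : ∀ x : Fin n → ℝ, 0 ≤ Q x := by
    intro x
    rw [key x]
    have h1 : 0 ≤ ∑ i, ∑ j, w i * P i j * (x i - x j)^2 :=
      Finset.sum_nonneg fun i _ => Finset.sum_nonneg fun j _ =>
        mul_nonneg (mul_nonneg (hwpos i).le (hP0 i j)) (sq_nonneg _)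
    linarith
  -- Δ applied to hitting-time vectors
  have hΔMoff : ∀ (c i : Fin n), i ≠ c → ∑ j, Δ i j * M j c = w i := by
    intro c i hic
    have h1 : ∑ j, Δ i j * M j c = w i * M i c - w i * ∑ j, P i j * M j c := by
      have h2 : ∀ j, Δ i j * M j c
          = (if i = j then w i * M j c else 0) - w i * (P i j * M j c) := by
        intro j
        rw [hΔ]
        by_cases h : i = j <;> simp [h] <;> ring
      simp only [h2, Finset.sum_sub_distrib]
      rw [Finset.sum_ite_eq Finset.univ i (fun j => w i * M j c), ← Finset.mul_sum]
      simp
    have h2 := hMstep i c hic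
    have h3 : ∑ j, P i j * M j c = M i c - 1 := by linarith
    rw [h1, h3]
    ring
  have hΔM : ∀ (c i : Fin n), ∑ j, Δ i j * M j c = if i = c then w i - 1 else w i := by
    intro c i
    by_cases hic : i = c
    · rw [if_pos hic, hic]
      have htot : ∑ i', ∑ j, Δ i' j * M j c = 0 := by
        rw [Finset.sum_comm]
        refine Finset.sum_eq_zero fun j _ => ?_
        rw [← Finset.sum_mul, hcol j, zero_mul]
      have hsplit := Finset.add_sum_erase Finset.univ
        (fun i' => ∑ j, Δ i' j * M j c) (Finset.mem_univ c)
      have herase : ∑ i' ∈ Finset.univ.erase c, (∑ j, Δ i' j * M j c)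
          = ∑ i' ∈ Finset.univ.erase c, w i' :=
        Finset.sum_congr rfl fun i' hi' => hΔMoff c i' (Finset.ne_of_mem_erase hi')
      have hwsum : ∑ i' ∈ Finset.univ.erase c, w i' = 1 - w c := by
        have h4 := Finset.add_sum_erase Finset.univ w (Finset.mem_univ c)
        rw [hw1] at h4
        linarith
      rw [herase, hwsum, htot] at hsplit
      linarith
    · rw [if_neg hic]
      exact hΔMoff c i hic
  have hΔu : ∀ i, ∑ j, Δ i j * u j
      = (if i = a then (1:ℝ) else 0) - (if i = b then (1:ℝ) else 0) := by
    intro i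
    have h1 : ∑ j, Δ i j * u j = (∑ j, Δ i j * M j b) - ∑ j, Δ i j * M j a := by
      rw [← Finset.sum_sub_distrib]
      exact Finset.sum_congr rfl fun j _ => by simp only [hu]; ring
    rw [h1, hΔM b i, hΔM a i]
    by_cases hia : i = a
    · subst hia
      rw [if_neg hab, if_pos rfl, if_pos rfl, if_neg hab]
      ring
    · by_cases hib : i = b
      · subst hib
        rw [if_pos rfl, if_neg (fun h => hia h), if_neg hia, if_pos rfl]
        ring
      · rw [if_neg hib, if_neg hia, if_neg hia, if_neg hib]
        ring
  -- pairing identities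
  have hB1 : ∀ x : Fin n → ℝ, ∑ i, ∑ j, x i * Δ i j * u j = x a - x b := by
    intro x
    have h1 : ∀ i, ∑ j, x i * Δ i j * u j
        = x i * ((if i = a then (1:ℝ) else 0) - (if i = b then (1:ℝ) else 0)) := by
      intro i
      rw [← hΔu i, Finset.mul_sum]
      exact Finset.sum_congr rfl fun j _ => by ring
    simp only [h1, mul_sub, mul_ite, mul_one, mul_zero, Finset.sum_sub_distrib,
      Finset.sum_ite_eq', Finset.mem_univ, if_true]
  have hB2 : ∀ x : Fin n → ℝ, ∑ i, ∑ j, u i * Δ i j * x j = x a - x b := by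
    intro x
    rw [Finset.sum_comm, ← hB1 x]
    exact Finset.sum_congr rfl fun j _ => Finset.sum_congr rfl fun i _ => by
      rw [hsymm i j]; ring
  have hua : u a - u b = T a b := by
    simp only [hu, hMdiag, hT a b]
    ring
  have hTval : Q u = T a b := by
    rw [← hua, ← hB1 u]
  -- bilinear expansion
  have hexpand : ∀ x y : Fin n → ℝ, Q (fun i => x i + y i) =
      Q x + (∑ i, ∑ j, x i * Δ i j * y j) + (∑ i, ∑ j, y i * Δ i j * x j) + Q y := by
    intro x y
    simp only [hQ]
    rw [← Finset.sum_add_distrib, ← Finset.sum_add_distrib, ← Finset.sum_add_distrib]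
    refine Finset.sum_congr rfl fun i _ => ?_
    rw [← Finset.sum_add_distrib, ← Finset.sum_add_distrib, ← Finset.sum_add_distrib]
    exact Finset.sum_congr rfl fun j _ => by ring
  have hscale : ∀ (t : ℝ) (x : Fin n → ℝ), Q (fun i => t * x i) = t^2 * Q x := by
    intro t x
    simp only [hQ, Finset.mul_sum]
    refine Finset.sum_congr rfl fun i _ => Finset.sum_congr rfl fun j _ => by ring
  -- T a b ≠ 0
  have hTne : T a b ≠ 0 := by
    intro h0
    have hQu : Q u = 0 := by rw [hTval, h0]
    set e : Fin n → ℝ := fun i => if i = a then (1:ℝ) else 0 with he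
    have hea : e a = 1 := by simp [he]
    have heb : e b = 0 := by simp [he, hab, Ne.symm]
    set qe : ℝ := Q e with hqe
    have hqe0 : 0 ≤ qe := hQpos e
    set t : ℝ := -(1/(qe+1)) with ht
    have hs : (0:ℝ) < qe + 1 := by linarith
    have h1 := hexpand u (fun i => t * e i)
    have h2 : ∑ i, ∑ j, u i * Δ i j * (t * e j) = t := by
      have h3 : ∑ i, ∑ j, u i * Δ i j * ((fun i => t * e i) j) = (t * e a) - (t * e b) :=
        hB2 (fun i => t * e i)
      simp only at h3
      rw [h3, hea, heb]
      ring
    have h4 : ∑ i, ∑ j, (t * e i) * Δ i j * u j = t := by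
      have h5 : ∑ i, ∑ j, ((fun i => t * e i) i) * Δ i j * u j = (t * e a) - (t * e b) :=
        hB1 (fun i => t * e i)
      simp only at h5
      rw [h5, hea, heb]
      ring
    have h6 : Q (fun i => u i + t * e i) = 2 * t + t^2 * qe := by
      rw [h1, h2, h4, hscale t e, hQu, ← hqe]
      ring
    have h7 := hQpos (fun i => u i + t * e i)
    rw [h6] at h7
    have ht1 : t * (qe + 1) = -1 := by
      rw [ht]
      field_simp
    nlinarith [sq_nonneg (qe + 1), mul_pos hs hs]
  -- the minimizer
  set φm : Fin n → ℝ := fun i => (u i - u b) / T a b with hφm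
  have hφma : φm a = 1 := by
    simp only [hφm]
    rw [hua]
    field_simp
  have hφmb : φm b = 0 := by simp [hφm]
  have hΔφ : ∀ i, ∑ j, Δ i j * φm j
      = ((if i = a then (1:ℝ) else 0) - (if i = b then (1:ℝ) else 0)) / T a b := by
    intro i
    have h1 : ∑ j, Δ i j * φm j
        = ((∑ j, Δ i j * u j) - (∑ j, Δ i j) * u b) / T a b := by
      have h0 : ∀ j, Δ i j * φm j = (Δ i j * u j - Δ i j * u b) / T a b := by
        intro j; simp only [hφm]; ring
      simp only [h0]
      rw [← Finset.sum_div, Finset.sum_sub_distrib, ← Finset.sum_mul]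
    rw [h1, hΔu i, hrow i]
    ring_nf
  have hC1 : ∀ x : Fin n → ℝ, ∑ i, ∑ j, x i * Δ i j * φm j = (x a - x b) / T a b := by
    intro x
    have h1 : ∀ i, ∑ j, x i * Δ i j * φm j
        = x i * (((if i = a then (1:ℝ) else 0) - (if i = b then (1:ℝ) else 0)) / T a b) := by
      intro i
      rw [← hΔφ i, Finset.mul_sum]
      exact Finset.sum_congr rfl fun j _ => by ring
    simp only [h1]
    have h2 : ∀ i, x i * (((if i = a then (1:ℝ) else 0) - (if i = b then (1:ℝ) else 0)) / T a b)
        = ((if i = a then x i else 0) - (if i = b then x i else 0)) / T a b := by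
      intro i
      by_cases hia : i = a
      · subst hia
        simp only [if_pos rfl, if_neg hab, eq_self_iff_true, if_true]
        ring
      · by_cases hib : i = b
        · subst hib
          simp only [if_neg hia, if_pos rfl, eq_self_iff_true, if_true]
          ring
        · simp only [if_neg hia, if_neg hib]
          ring
    simp only [h2]
    rw [← Finset.sum_div, Finset.sum_sub_distrib]
    simp [Finset.sum_ite_eq', Finset.mem_univ]
  have hC2 : ∀ x : Fin n → ℝ, ∑ i, ∑ j, φm i * Δ i j * x j = (x a - x b) / T a b := by
    intro x
    rw [Finset.sum_comm, ← hC1 x]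
    exact Finset.sum_congr rfl fun j _ => Finset.sum_congr rfl fun i _ => by
      rw [hsymm i j]; ring
  have hQφm : Q φm = 1 / T a b := by
    have := hC1 φm
    rw [hφma, hφmb] at this
    simpa [hQ] using this
  constructor
  · exact ⟨φm, hφma, hφmb, hQφm.symm⟩
  · rintro v ⟨φ, hφa, hφb, rfl⟩
    set η : Fin n → ℝ := fun i => φ i - φm i with hη
    have hηa : η a = 0 := by simp [hη, hφa, hφma]
    have hηb : η b = 0 := by simp [hη, hφb, hφmb]
    have hφeq : φ = fun i => φm i + η i := by
      funext i; simp [hη]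
    have h1 : Q φ = Q φm + (η a - η b) / T a b + (η a - η b) / T a b + Q η := by
      rw [hφeq, hexpand φm η, hC2 η, hC1 η]
    have h2 : Q φ = 1 / T a b + Q η := by
      rw [h1, hQφm, hηa, hηb]
      ring
    have h3 := hQpos η
    have : Q φ = ∑ i, ∑ j, φ i * Δ i j * φ j := rfl
    rw [← this]
    linarith
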